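/- arXiv:1501.00689 — 11 statements merged into one kernel-verified Lean document; each statement's English description precedes it below -/
import Mathlib

section
/- Let L and L' be limit operators on a set X, with derived topologies τ_L and τ_{L'} respectively. If L is of first order and τ_L ⊆ τ_{L'}, then L'(σ) ⊆ L(σ) for every sequence σ in X. -/
open Set Filter Topology

universe u

/-- A limit operator on `X`: a map from sequences to sets of "limits",
compatible with subsequences. -/
def IsLimitOp {X : Type u} (L : (ℕ → X) → Set X) : Prop :=
  ∀ (σ : ℕ → X) (φ : ℕ → ℕ), StrictMono φ → L σ ⊆ L (σ ∘ φ)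

/-- `C` is sequentially closed with respect to the limit operator `L`. -/
def SeqClosedFor {X : Type u} (L : (ℕ → X) → Set X) (C : Set X) : Prop :=
  ∀ σ : ℕ → X, (∀ n, σ n ∈ C) → L σ ⊆ C

/-- The topology derived from a limit operator `L`: its closed sets are exactly
the sets `C` such that `L σ ⊆ C` for every sequence `σ` with values in `C`. -/
def derivedTop {X : Type u} (L : (ℕ → X) → Set X) (hL : IsLimitOp L) :
    TopologicalSpace X :=
  TopologicalSpace.ofClosed {C | SeqClosedFor L C}
    (fun σ h => absurd (h 0) (Set.notMem_empty _))
    (fun A hA σ hσ p hp => by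
      rw [Set.mem_sInter]
      intro C hC
      exact hA hC σ (fun n => Set.mem_sInter.mp (hσ n) C hC) hp)
    (by
      intro C hC B hB σ hσ p hp
      by_cases hinf : {n | σ n ∈ C}.Infinite
      · exact Or.inl (hC _ (fun n => Nat.nth_mem_of_infinite hinf n)
          (hL σ _ (Nat.nth_strictMono hinf) hp))
      · have hfin : {n | σ n ∈ C}.Finite := Set.not_infinite.mp hinf
        have hBinf : {n | σ n ∈ B}.Infinite :=
          Set.Infinite.mono (fun n hn => (hσ n).resolve_left hn) hfin.infinite_compl
        exact Or.inr (hB _ (fun n => Nat.nth_mem_of_infinite hBinf n)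
          (hL σ _ (Nat.nth_strictMono hBinf) hp)))

/-- The limit operator associated to a topology `t`: it assigns to each sequence
the set of all its limits in `t`. -/
def assocLimOp {X : Type u} (t : TopologicalSpace X) : (ℕ → X) → Set X :=
  fun σ => {p | Filter.Tendsto σ Filter.atTop (@nhds X t p)}

theorem assocLimOp_isLimitOp {X : Type u} (t : TopologicalSpace X) :
    IsLimitOp (assocLimOp t) :=
  fun _σ _φ hφ _p hp => hp.comp hφ.tendsto_atTop

/-- `τ_Seq`: the topology derived from the limit operator associated to `t`. -/
def seqModTop {X : Type u} (t : TopologicalSpace X) : TopologicalSpace X :=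
  derivedTop (assocLimOp t) (assocLimOp_isLimitOp t)

/-- `L` is of first order on `D`. -/
def IsFirstOrderOpOn {X : Type u} (L : (ℕ → X) → Set X) (hL : IsLimitOp L)
    (D : Set X) : Prop :=
  ∀ σ : ℕ → X, (∀ n, σ n ∈ D) → ∀ p ∈ D,
    (p ∈ L σ ↔ Filter.Tendsto σ Filter.atTop (@nhds X (derivedTop L hL) p))

/-- `L` is of first order. -/
def IsFirstOrderOp {X : Type u} (L : (ℕ → X) → Set X) (hL : IsLimitOp L) : Prop :=
  ∀ (σ : ℕ → X) (p : X),
    p ∈ L σ ↔ Filter.Tendsto σ Filter.atTop (@nhds X (derivedTop L hL) p)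

/-- A limit operator is coherent if every constant sequence has its value as a limit. -/
def CoherentOp {X : Type u} (L : (ℕ → X) → Set X) : Prop :=
  ∀ x : X, x ∈ L (fun _ => x)

/-- The transfinite iterates of a limit operator: `L^1 σ = L σ` and, for `i ≠ 1`,
`L^i σ = {p | p ∈ L ρ for some sequence ρ with values in ⋃_{j<i} L^j σ}`. -/
noncomputable def iterOp {X : Type u} (L : (ℕ → X) → Set X) (σ : ℕ → X)
    (i : Ordinal.{0}) : Set X :=
  if i = 1 then L σ
  else {p | ∃ ρ : ℕ → X,
    (∀ n, ∃ j : Ordinal.{0}, ∃ _hj : j < i, ρ n ∈ iterOp L σ j) ∧ p ∈ L ρ}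
termination_by i

open Classical in
/-- The modified limit operator `L*` relative to a subset `D`. -/
noncomputable def modOp {X : Type u} (L : (ℕ → X) → Set X) (D : Set X) :
    (ℕ → X) → Set X := fun σ =>
  if ∃ φ : ℕ → ℕ, StrictMono φ ∧ ∃ p ∈ D, p ∈ L (σ ∘ φ) then L σ ∩ D else L σ

/-- The `D`-separating topology `τ*`: generated by the subbasis consisting of the
`t`-open sets together with the complements of compact subsets of `D`. -/
def sepTop {X : Type u} (t : TopologicalSpace X) (D : Set X) : TopologicalSpace X :=
  TopologicalSpace.generateFrom
    ({U : Set X | @IsOpen X t U} ∪ {V : Set X | ∃ K, K ⊆ D ∧ @IsCompact X t K ∧ V = Kᶜ})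

/-- Condition (A_Fin): `t'` refines `t`. -/
def AFin {X : Type u} (t t' : TopologicalSpace X) : Prop :=
  ∀ U : Set X, @IsOpen X t U → @IsOpen X t' U

/-- Condition (A_Sep): every `p ∈ D` and `q ∉ D` are separated by a `t`-open set
and a `t'`-open set. -/
def ASep {X : Type u} (t t' : TopologicalSpace X) (D : Set X) : Prop :=
  ∀ p ∈ D, ∀ q ∈ (Dᶜ : Set X), ∃ U V : Set X,
    @IsOpen X t U ∧ @IsOpen X t' V ∧ p ∈ U ∧ q ∈ V ∧ U ∩ V = ∅

/-- The restriction of a limit operator `L` to a subset `D`, as an operator on `↥D`: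
`L|_D(σ) = L(σ) ∩ D`. -/
def restrictOp {X : Type u} (L : (ℕ → X) → Set X) (D : Set X) :
    (ℕ → D) → Set D :=
  fun σ => {d : D | (d : X) ∈ L (fun n => (σ n : X))}
theorem seqClosed_of_isOpen {X : Type u} (L : (ℕ → X) → Set X) (hL : IsLimitOp L)
    {U : Set X} (hU : @IsOpen X (derivedTop L hL) U) : SeqClosedFor L Uᶜ := hU

theorem stmt_1 {X : Type u} (L L' : (ℕ → X) → Set X)
    (hL : IsLimitOp L) (hL' : IsLimitOp L')
    (hfo : IsFirstOrderOp L hL)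
    (hsub : ∀ U : Set X, @IsOpen X (derivedTop L hL) U → @IsOpen X (derivedTop L' hL') U) :
    ∀ σ : ℕ → X, L' σ ⊆ L σ := by
  intro σ p hp
  rw [hfo σ p]
  letI := derivedTop L hL
  rw [tendsto_nhds]
  intro U hU hpU
  by_contra hcon
  have hinf : {n | σ n ∈ Uᶜ}.Infinite := by
    rw [Filter.mem_atTop_sets] at hcon
    push_neg at hcon
    rw [Set.infinite_coe_iff.symm]
    rw [Set.infinite_coe_iff]
    apply Set.infinite_of_not_bddAbove
    rintro ⟨a, ha⟩
    obtain ⟨b, hab, hb⟩ := hcon (a + 1)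
    exact absurd (ha hb) (by omega)
  have hclosed : SeqClosedFor L' Uᶜ := seqClosed_of_isOpen L' hL' (hsub U hU)
  have := hclosed (σ ∘ Nat.nth _) (fun n => Nat.nth_mem_of_infinite hinf n)
    (hL' σ _ (Nat.nth_strictMono hinf) hp)
  exact this hpU
end

section
/- For any limit operator L on a set X, the derived topology τ_L is sequential: every subset of X that is sequentially closed for τ_L (i.e., contains all limits in τ_L of convergent sequences of its elements) is closed for τ_L. -/
open Set Filter Topology

universe u

theorem isClosed_derivedTop_iff {X : Type u} (L : (ℕ → X) → Set X)
    (hL : IsLimitOp L) (C : Set X) :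
    @IsClosed X (derivedTop L hL) C ↔ SeqClosedFor L C := by
  letI := derivedTop L hL
  have : IsClosed C ↔ IsOpen Cᶜ := ⟨fun h => h.isOpen_compl, fun h => ⟨h⟩⟩
  rw [this]
  show Cᶜᶜ ∈ {C | SeqClosedFor L C} ↔ _
  rw [compl_compl]
  rfl

theorem tendsto_derivedTop {X : Type u} (L : (ℕ → X) → Set X) (hL : IsLimitOp L)
    (σ : ℕ → X) (p : X) (hp : p ∈ L σ) :
    Filter.Tendsto σ Filter.atTop (@nhds X (derivedTop L hL) p) := by
  letI := derivedTop L hL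
  rw [tendsto_nhds]
  intro U hU hpU
  by_contra h
  have hinf : {n | σ n ∉ U}.Infinite := by
    by_contra hfin
    rw [Set.not_infinite] at hfin
    refine h (Filter.mem_atTop_sets.mpr ⟨hfin.bddAbove.choose + 1, fun b hb => ?_⟩)
    by_contra hb'
    have := hfin.bddAbove.choose_spec hb'
    omega
  have hclosed : SeqClosedFor L Uᶜ :=
    (isClosed_derivedTop_iff L hL Uᶜ).mp (isClosed_compl_iff.mpr hU)
  have : p ∈ Uᶜ :=
    hclosed (σ ∘ Nat.nth _) (fun n => Nat.nth_mem_of_infinite hinf n)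
      (hL σ _ (Nat.nth_strictMono hinf) hp)
  exact this hpU

theorem stmt_2 {X : Type u} (L : (ℕ → X) → Set X) (hL : IsLimitOp L) :
    ∀ C : Set X,
      (∀ (σ : ℕ → X) (p : X), (∀ n, σ n ∈ C) →
        Filter.Tendsto σ Filter.atTop (@nhds X (derivedTop L hL) p) → p ∈ C) →
      @IsClosed X (derivedTop L hL) C := by
  intro C hC
  rw [isClosed_derivedTop_iff]
  intro σ hσ p hp
  exact hC σ p hσ (tendsto_derivedTop L hL σ p hp)
end

section
/- Let τ be a topology on a set X and let τ_Seq := τ_{L_τ} be the topology derived from the associated limit operator L_τ. Then L_τ is a limit operator of first order for τ_Seq: for every sequence σ in X and every point p ∈ X, the sequence σ converges to p in τ_Seq if and only if p ∈ L_τ(σ), i.e., if and only if σ converges to p in τ. -/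
open Set Filter Topology

universe u

theorem stmt_4 {X : Type u} (t : TopologicalSpace X) :
    ∀ (σ : ℕ → X) (p : X),
      (Filter.Tendsto σ Filter.atTop (@nhds X (seqModTop t) p) ↔ p ∈ assocLimOp t σ) ∧
      (p ∈ assocLimOp t σ ↔ Filter.Tendsto σ Filter.atTop (@nhds X t p)) := by
  have hopen : ∀ U : Set X, @IsOpen X (seqModTop t) U ↔ SeqClosedFor (assocLimOp t) Uᶜ :=
    fun U => Iff.rfl
  intro σ p
  constructor
  · constructor
    · -- seqModTop convergence → t convergence
      intro h
      show Filter.Tendsto σ Filter.atTop (@nhds X t p)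
      rw [@tendsto_nhds X t ℕ p σ atTop]
      intro U hU hpU
      have hUo : @IsOpen X (seqModTop t) U := by
        rw [hopen]
        intro ρ hρ q hq
        have : q ∈ @closure X t Uᶜ := by
          letI := t
          exact mem_closure_of_tendsto hq (Filter.Eventually.of_forall hρ)
        rwa [@IsClosed.closure_eq X t _ ((@isClosed_compl_iff X t U).mpr hU)] at this
      exact (@tendsto_nhds X (seqModTop t) ℕ p σ atTop).mp h U hUo hpU
    · -- t convergence → seqModTop convergence
      intro h
      rw [@tendsto_nhds X (seqModTop t) ℕ p σ atTop]
      intro U hU hpU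
      by_contra hc
      have hc' : ¬ ∀ᶠ n in Filter.atTop, σ n ∈ U := hc
      rw [Filter.not_eventually] at hc'
      have hinf : {n | σ n ∈ Uᶜ}.Infinite := by
        exact Nat.frequently_atTop_iff_infinite.mp hc'
      have hsub : Filter.Tendsto (σ ∘ Nat.nth {n | σ n ∈ Uᶜ}) Filter.atTop (@nhds X t p) :=
        h.comp (Nat.nth_strictMono hinf).tendsto_atTop
      have := (hopen U).mp hU (σ ∘ Nat.nth {n | σ n ∈ Uᶜ})
        (fun n => Nat.nth_mem_of_infinite hinf n) hsub
      exact this hpU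
  · exact Iff.rfl
end

section
/- Let L be a coherent limit operator on a set X with derived topology τ_L, and let (L^i)_{i ≥ 1} be its transfinite iterates. Then for every ordinal i ≥ 1 and every sequence σ in X, L^i(σ) ⊆ L_{τ_L}(σ); that is, every point of L^i(σ) is a limit of σ in the topology τ_L. -/
open Set Filter Topology

universe u

theorem mem_L_tendsto {X : Type u} (L : (ℕ → X) → Set X) (hL : IsLimitOp L)
    {σ : ℕ → X} {p : X} (hp : p ∈ L σ) :
    Filter.Tendsto σ Filter.atTop (@nhds X (derivedTop L hL) p) := by
  letI t := derivedTop L hL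
  rw [tendsto_nhds]
  intro U hU hpU
  by_contra h
  have h' : ¬ ∀ᶠ n in Filter.atTop, σ n ∈ U := h
  rw [Filter.not_eventually] at h' 
  have hinf : {n | σ n ∉ U}.Infinite :=
    Nat.frequently_atTop_iff_infinite.mp (h'.mono fun n hn => hn)
  have hclosed : SeqClosedFor L Uᶜ := hU
  exact hclosed (σ ∘ Nat.nth _) (fun n => Nat.nth_mem_of_infinite hinf n)
    (hL σ _ (Nat.nth_strictMono hinf) hp) hpU

theorem stmt_7 {X : Type u} (L : (ℕ → X) → Set X) (hL : IsLimitOp L)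
    (hcoh : CoherentOp L) :
    ∀ i : Ordinal.{0}, 1 ≤ i → ∀ σ : ℕ → X,
      iterOp L σ i ⊆ {p | Filter.Tendsto σ Filter.atTop (@nhds X (derivedTop L hL) p)} := by
  intro i
  induction i using Ordinal.induction with
  | h i IH =>
  intro hi σ p hp
  letI t := derivedTop L hL
  by_cases h1 : i = 1
  · subst h1
    rw [iterOp, if_pos rfl] at hp
    exact mem_L_tendsto L hL hp
  · rw [iterOp, if_neg h1] at hp
    obtain ⟨ρ, hρ, hpρ⟩ := hp
    have hρlim : ∀ n, Filter.Tendsto σ Filter.atTop (@nhds X t (ρ n)) := by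
      intro n
      obtain ⟨j, hj, hmem⟩ := hρ n
      rcases eq_or_ne j 0 with rfl | hj0
      · exfalso
        rw [iterOp, if_neg (by exact zero_ne_one)] at hmem
        obtain ⟨κ, hκ, _⟩ := hmem
        obtain ⟨k, hk, _⟩ := hκ 0
        exact not_lt_zero hk
      · exact IH j hj (Ordinal.one_le_iff_ne_zero.mpr hj0) σ hmem
    have hρp := mem_L_tendsto L hL hpρ
    show Filter.Tendsto σ Filter.atTop (@nhds X t p)
    rw [tendsto_nhds] at hρp ⊢
    intro U hU hpU
    obtain ⟨N, hN⟩ := (Filter.eventually_atTop.mp (hρp U hU hpU) : ∃ N, ∀ n ≥ N, ρ n ∈ U)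
    have hN := hN N le_rfl
    have h2 := hρlim N
    rw [tendsto_nhds] at h2
    exact h2 U hU hN
end

section
/- Let (X, τ) be a topological space and D ⊆ X an open subset that, with the subspace topology, is Hausdorff and locally compact. Let τ* be the topology on X generated by the subbasis τ ∪ {X \ K : K a compact subset of D}. Then: (a) τ ⊆ τ*; (b) for every p ∈ D and q ∈ X \ D there exist U ∈ τ and V ∈ τ* with p ∈ U, q ∈ V and U ∩ V = ∅; and (c) the subspace topologies induced on D by τ* and by τ coincide. -/
open Set Filter Topology

universe u

theorem stmt_8 {X : Type u} (t : TopologicalSpace X) (D : Set X)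
    (hD : @IsOpen X t D)
    (hT2 : @T2Space D (TopologicalSpace.induced (Subtype.val : D → X) t))
    (hLC : @LocallyCompactSpace D (TopologicalSpace.induced (Subtype.val : D → X) t)) :
    AFin t (sepTop t D) ∧
    ASep t (sepTop t D) D ∧
    TopologicalSpace.induced (Subtype.val : D → X) (sepTop t D) =
      TopologicalSpace.induced (Subtype.val : D → X) t := by
  letI : TopologicalSpace X := t
  letI : TopologicalSpace D := TopologicalSpace.induced (Subtype.val : D → X) t
  have hAFin : AFin t (sepTop t D) := fun U hU =>
    TopologicalSpace.isOpen_generateFrom_of_mem (Or.inl hU)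
  refine ⟨hAFin, ?_, ?_⟩
  · -- ASep
    intro p hp q hq
    obtain ⟨K, hKc, hKn⟩ := exists_compact_mem_nhds (⟨p, hp⟩ : D)
    have hint : (⟨p, hp⟩ : D) ∈ interior K := mem_interior_iff_mem_nhds.mpr hKn
    refine ⟨Subtype.val '' interior K, (Subtype.val '' K)ᶜ, ?_, ?_, ?_, ?_, ?_⟩
    · exact hD.isOpenMap_subtype_val _ isOpen_interior
    · refine TopologicalSpace.isOpen_generateFrom_of_mem (Or.inr ?_)
      exact ⟨Subtype.val '' K, by rintro x ⟨y, _, rfl⟩; exact y.2,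
        hKc.image continuous_subtype_val, rfl⟩
    · exact ⟨⟨p, hp⟩, hint, rfl⟩
    · intro hqK
      obtain ⟨y, _, rfl⟩ := hqK
      exact hq y.2
    · rw [Set.eq_empty_iff_forall_notMem]
      rintro x ⟨⟨y, hy, rfl⟩, hx2⟩
      exact hx2 ⟨y, interior_subset hy, rfl⟩
  · -- induced topologies coincide
    have h1 : sepTop t D ≤ t := fun U hU => hAFin U hU
    refine le_antisymm (induced_mono h1) ?_
    · rw [sepTop, induced_generateFrom_eq]
      refine le_generateFrom ?_
      rintro s ⟨u, hu, rfl⟩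
      rcases hu with hu | ⟨K, hKD, hKc, rfl⟩
      · exact isOpen_induced hu
      · have hK : IsCompact (Subtype.val ⁻¹' K : Set D) := by
          rw [Topology.IsEmbedding.subtypeVal.isCompact_iff,
            Set.image_preimage_eq_of_subset (by simpa using hKD)]
          exact hKc
        obtain ⟨C, hC, hCeq⟩ := isClosed_induced_iff.mp hK.isClosed
        refine isOpen_induced_iff.mpr ⟨Cᶜ ∩ D, (hC.isOpen_compl).inter hD, ?_⟩
        ext x
        simp only [Set.mem_preimage, Set.mem_inter_iff, Set.mem_compl_iff]
        have hxK : (x : X) ∈ K ↔ (x : X) ∈ C :=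
          ⟨fun h => Set.ext_iff.mp hCeq.symm x |>.mp h,
           fun h => Set.ext_iff.mp hCeq x |>.mp h⟩
        simp [hxK, x.2]
end

section
/- Let (X, τ) be a topological space and D ⊆ X an open subset that, with the subspace topology, is Hausdorff and locally compact. Let τ* be the topology on X generated by the subbasis τ ∪ {X \ K : K a compact subset of D}. If τ' is any topology on X satisfying (A_Fin) and (A_Sep), then τ* ⊆ τ'. Consequently, τ* is the unique topology on X satisfying (A_Fin), (A_Sep) and which is minimal among the topologies satisfying (A_Fin) and (A_Sep). -/
open Set Filter Topology

universe u

theorem nbhd_avoid_aux {X : Type u} (t : TopologicalSpace X) (D : Set X)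
    (hD : @IsOpen X t D)
    (hT2 : @T2Space D (TopologicalSpace.induced (Subtype.val : D → X) t))
    {K : Set X} (hKD : K ⊆ D) (hKc : @IsCompact X t K)
    {q : X} (hq : q ∈ D) (hqK : q ∉ K) :
    ∃ W : Set X, @IsOpen X t W ∧ q ∈ W ∧ W ⊆ Kᶜ := by
  letI := t
  haveI : T2Space D := hT2
  have hK' : IsCompact ((Subtype.val : D → X) ⁻¹' K) := by
    rw [Subtype.isCompact_iff]
    rwa [Subtype.image_preimage_coe, Set.inter_eq_right.mpr hKD]
  have hW : IsOpen ((Subtype.val : D → X) ⁻¹' K)ᶜ := hK'.isClosed.isOpen_compl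
  refine ⟨Subtype.val '' ((Subtype.val : D → X) ⁻¹' K)ᶜ,
    hD.isOpenMap_subtype_val _ hW, ⟨⟨q, hq⟩, hqK, rfl⟩, ?_⟩
  rintro x ⟨d, hd, rfl⟩
  exact hd

theorem compact_nbhd_aux {X : Type u} (t : TopologicalSpace X) (D : Set X)
    (hD : @IsOpen X t D)
    (hLC : @LocallyCompactSpace D (TopologicalSpace.induced (Subtype.val : D → X) t))
    {p : X} (hp : p ∈ D) :
    ∃ U K : Set X, @IsOpen X t U ∧ p ∈ U ∧ U ⊆ K ∧ K ⊆ D ∧ @IsCompact X t K := by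
  letI := t
  haveI : LocallyCompactSpace D := hLC
  obtain ⟨K', hK'c, hK'n⟩ := exists_compact_mem_nhds (⟨p, hp⟩ : D)
  obtain ⟨W, hWK, hWo, hpW⟩ := mem_nhds_iff.mp hK'n
  refine ⟨Subtype.val '' W, Subtype.val '' K', hD.isOpenMap_subtype_val _ hWo,
    ⟨⟨p, hp⟩, hpW, rfl⟩, Set.image_mono hWK,
    fun x ⟨d, _, hdx⟩ => hdx ▸ d.2, hK'c.image continuous_subtype_val⟩

theorem sepTop_le_aux {X : Type u} (t t' : TopologicalSpace X) (D : Set X)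
    (hD : @IsOpen X t D)
    (hT2 : @T2Space D (TopologicalSpace.induced (Subtype.val : D → X) t))
    (hA : AFin t t') (hS : ASep t t' D) :
    ∀ U : Set X, @IsOpen X (sepTop t D) U → @IsOpen X t' U := by
  letI := t'
  have hsub : ∀ s ∈ ({U : Set X | @IsOpen X t U} ∪
      {V : Set X | ∃ K, K ⊆ D ∧ @IsCompact X t K ∧ V = Kᶜ}), IsOpen s := by
    rintro s (hs | ⟨K, hKD, hKc, rfl⟩)
    · exact hA s hs
    · rw [isOpen_iff_forall_mem_open]
      intro q hq
      by_cases hqD : q ∈ D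
      · obtain ⟨W, hWo, hqW, hWK⟩ := nbhd_avoid_aux t D hD hT2 hKD hKc hqD hq
        exact ⟨W, hWK, hA W hWo, hqW⟩
      · have hsep : ∀ p : K, ∃ U V : Set X, @IsOpen X t U ∧ @IsOpen X t' V ∧
            (p : X) ∈ U ∧ q ∈ V ∧ U ∩ V = ∅ :=
          fun p => hS p (hKD p.2) q hqD
        choose U V hU hV hpU hqV hUV using hsep
        have hcov : K ⊆ ⋃ p : K, U p := fun x hx =>
          Set.mem_iUnion.mpr ⟨⟨x, hx⟩, hpU ⟨x, hx⟩⟩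
        obtain ⟨s, hs⟩ := @IsCompact.elim_finite_subcover X t K K hKc U hU hcov
        refine ⟨⋂ p ∈ s, V p, ?_, isOpen_biInter_finset (fun p _ => hV p),
          Set.mem_iInter₂.mpr (fun p _ => hqV p)⟩
        intro x hx hxK
        obtain ⟨p, hps, hpx⟩ := Set.mem_iUnion₂.mp (hs hxK)
        have hmem : x ∈ U p ∩ V p := ⟨hpx, Set.mem_iInter₂.mp hx p hps⟩
        rw [hUV p] at hmem
        exact hmem
  intro U hU
  exact (le_generateFrom hsub) U hU

theorem stmt_9 {X : Type u} (t : TopologicalSpace X) (D : Set X)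
    (hD : @IsOpen X t D)
    (hT2 : @T2Space D (TopologicalSpace.induced (Subtype.val : D → X) t))
    (hLC : @LocallyCompactSpace D (TopologicalSpace.induced (Subtype.val : D → X) t)) :
    (∀ t' : TopologicalSpace X, AFin t t' → ASep t t' D →
      ∀ U : Set X, @IsOpen X (sepTop t D) U → @IsOpen X t' U) ∧
    AFin t (sepTop t D) ∧ ASep t (sepTop t D) D ∧
    (∀ t' : TopologicalSpace X, AFin t t' → ASep t t' D →
      (∀ U : Set X, @IsOpen X t' U → @IsOpen X (sepTop t D) U) →
      ∀ U : Set X, @IsOpen X (sepTop t D) U → @IsOpen X t' U) ∧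
    (∀ t'' : TopologicalSpace X, AFin t t'' → ASep t t'' D →
      (∀ t' : TopologicalSpace X, AFin t t' → ASep t t' D →
        (∀ U : Set X, @IsOpen X t' U → @IsOpen X t'' U) →
        ∀ U : Set X, @IsOpen X t'' U → @IsOpen X t' U) →
      t'' = sepTop t D) := by
  have key := fun t' => sepTop_le_aux t t' D hD hT2
  have hAFin : AFin t (sepTop t D) := fun U hU =>
    TopologicalSpace.GenerateOpen.basic U (Or.inl hU)
  have hASep : ASep t (sepTop t D) D := by
    intro p hp q hq
    obtain ⟨U, K, hUo, hpU, hUK, hKD, hKc⟩ := compact_nbhd_aux t D hD hLC hp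
    refine ⟨U, Kᶜ, hUo,
      TopologicalSpace.GenerateOpen.basic _ (Or.inr ⟨K, hKD, hKc, rfl⟩),
      hpU, fun hqK => hq (hKD hqK), ?_⟩
    apply Set.eq_empty_of_forall_notMem
    rintro x ⟨hxU, hxc⟩
    exact hxc (hUK hxU)
  refine ⟨fun t' hA hS => key t' hA hS, hAFin, hASep,
    fun t' hA hS _ => key t' hA hS, ?_⟩
  intro t'' hA hS hmin
  apply TopologicalSpace.ext
  ext U
  constructor
  · exact fun h => hmin (sepTop t D) hAFin hASep (key t'' hA hS) U h
  · exact fun h => key t'' hA hS U h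
end

section
/- Let L and L' be limit operators on a set X with derived topologies τ_L and τ_{L'}, let D ⊆ X be open, locally compact and Hausdorff for τ_L, and assume τ_L ⊆ τ_{L'}. If the topology τ_{L'} satisfies (A_Sep) with respect to (τ_L, D), then for every sequence σ in X: if L'(σ) ∩ D ≠ ∅ then L'(σ) ⊆ D. -/
open Set Filter Topology

universe u

lemma derivedTop_isOpen_iff {X : Type u} (L : (ℕ → X) → Set X) (hL : IsLimitOp L)
    (U : Set X) : @IsOpen X (derivedTop L hL) U ↔ SeqClosedFor L Uᶜ := Iff.rfl

lemma frequently_mem_of_mem_limOp {X : Type u} {L : (ℕ → X) → Set X} {hL : IsLimitOp L}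
    {σ : ℕ → X} {p : X} (hp : p ∈ L σ) {U : Set X}
    (hU : @IsOpen X (derivedTop L hL) U) (hpU : p ∈ U) :
    {n | σ n ∈ U}.Infinite := by
  by_contra hfin
  rw [Set.not_infinite] at hfin
  obtain ⟨N, hN⟩ := hfin.bddAbove
  have hφ : StrictMono (fun n => n + (N + 1)) := fun a b h => by
    simpa using Nat.add_lt_add_right h (N + 1)
  have hmem : ∀ n, (σ ∘ fun n => n + (N + 1)) n ∈ Uᶜ := by
    intro n hn
    have : n + (N + 1) ≤ N := hN hn
    omega
  exact ((derivedTop_isOpen_iff L hL U).mp hU) _ hmem (hL σ _ hφ hp) hpU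

theorem stmt_11 {X : Type u} (L L' : (ℕ → X) → Set X)
    (hL : IsLimitOp L) (hL' : IsLimitOp L') (D : Set X)
    (hD : @IsOpen X (derivedTop L hL) D)
    (hT2 : @T2Space D (TopologicalSpace.induced (Subtype.val : D → X) (derivedTop L hL)))
    (hLC : @LocallyCompactSpace D (TopologicalSpace.induced (Subtype.val : D → X) (derivedTop L hL)))
    (hfin : AFin (derivedTop L hL) (derivedTop L' hL'))
    (hsep : ASep (derivedTop L hL) (derivedTop L' hL') D) :
    ∀ σ : ℕ → X, (L' σ ∩ D).Nonempty → L' σ ⊆ D := by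
  intro σ ⟨p, hpL, hpD⟩ q hqL
  by_contra hqD
  obtain ⟨U, V, hUo, hVo, hpU, hqV, hUV⟩ := hsep p hpD q hqD
  have hU' : @IsOpen X (derivedTop L' hL') U := hfin U hUo
  have hinf : {n | σ n ∈ U}.Infinite :=
    frequently_mem_of_mem_limOp (hL := hL') hpL hU' hpU
  have hsub : q ∈ L' (σ ∘ Nat.nth {n | σ n ∈ U}) :=
    hL' σ _ (Nat.nth_strictMono hinf) hqL
  have hvals : ∀ n, (σ ∘ Nat.nth {n | σ n ∈ U}) n ∈ Vᶜ := by
    intro n hn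
    have : σ (Nat.nth {n | σ n ∈ U} n) ∈ U := Nat.nth_mem_of_infinite hinf n
    exact absurd (Set.mem_inter this hn) (by rw [hUV]; exact Set.notMem_empty _)
  exact absurd hqV (((derivedTop_isOpen_iff L' hL' V).mp hVo) _ hvals hsub)
end

section
/- Let L and L' be limit operators on a set X with derived topologies τ_L and τ_{L'}, let D ⊆ X be open, locally compact and Hausdorff for τ_L, and assume τ_L ⊆ τ_{L'}. Suppose additionally that L is of first order on D and that L(σ) ∩ D = L'(σ) ∩ D for every sequence σ with values in D. If, for every sequence σ in X, L'(σ) ∩ D ≠ ∅ implies L'(σ) ⊆ D, then the topology τ_{L'} satisfies (A_Sep) with respect to (τ_L, D). -/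
open Set Filter Topology

universe u

section Helpers

variable {X : Type u} {L : (ℕ → X) → Set X}

theorem derived_isClosed_iff (hL : IsLimitOp L) {C : Set X} :
    @IsClosed X (derivedTop L hL) C ↔ SeqClosedFor L C := by
  rw [← @isOpen_compl_iff X C (derivedTop L hL)]
  show Cᶜᶜ ∈ {C | SeqClosedFor L C} ↔ _
  rw [compl_compl]
  exact Iff.rfl

theorem exists_const_subseq (σ : ℕ → X) (h : ¬(Set.range σ).Infinite) :
    ∃ (φ : ℕ → ℕ) (x : X), StrictMono φ ∧ ∀ k, σ (φ k) = x := by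
  rw [Set.not_infinite] at h
  have hfib : ∃ x, {n | σ n = x}.Infinite := by
    by_contra hc
    push_neg at hc
    have hc : ∀ x, {n | σ n = x}.Finite := fun x => by simpa using hc x
    have huniv : (Set.univ : Set ℕ) = ⋃ x ∈ Set.range σ, {n | σ n = x} := by
      ext n
      simp only [Set.mem_univ, Set.mem_iUnion, Set.mem_setOf_eq, true_iff]
      exact ⟨σ n, ⟨n, rfl⟩, rfl⟩
    have : (Set.univ : Set ℕ).Finite := by
      rw [huniv]
      exact Set.Finite.biUnion h (fun x _ => hc x)
    exact Set.infinite_univ this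
  obtain ⟨x, hx⟩ := hfib
  exact ⟨Nat.nth _, x, Nat.nth_strictMono hx, fun k => Nat.nth_mem_of_infinite hx k⟩

theorem exists_subseq_eq (σ ρ : ℕ → X) (hrange : ∀ n, ρ n ∈ Set.range σ)
    (hinf : (Set.range ρ).Infinite) :
    ∃ φ ψ : ℕ → ℕ, StrictMono φ ∧ StrictMono ψ ∧ ∀ k, σ (φ k) = ρ (ψ k) := by
  have key : ∀ m n : ℕ, ∃ m' n', m < m' ∧ n < n' ∧ σ n' = ρ m' := by
    intro m n
    have hF : (σ '' Set.Iic n).Finite := (Set.finite_Iic n).image σ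
    have hA : {m' | ρ m' ∉ σ '' Set.Iic n}.Infinite := by
      by_contra h
      rw [Set.not_infinite] at h
      apply hinf
      have hsub : Set.range ρ ⊆ (σ '' Set.Iic n) ∪ (ρ '' {m' | ρ m' ∉ σ '' Set.Iic n}) := by
        rintro _ ⟨m', rfl⟩
        by_cases hm : ρ m' ∈ σ '' Set.Iic n
        · exact Or.inl hm
        · exact Or.inr ⟨m', hm, rfl⟩
      exact Set.Finite.subset (hF.union (h.image ρ)) hsub
    obtain ⟨m', hm', hmm⟩ := hA.exists_gt m
    obtain ⟨n', hn'⟩ := hrange m'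
    refine ⟨m', n', hmm, ?_, hn'⟩
    by_contra hle
    push_neg at hle
    exact hm' ⟨n', hle, hn'⟩
  choose f g hf hg hfg using key
  obtain ⟨n₀, hn₀⟩ := hrange 0
  let F : ℕ × ℕ → ℕ × ℕ := fun p => (f p.1 p.2, g p.1 p.2)
  let G : ℕ → ℕ × ℕ := fun k => F^[k] (0, n₀)
  have hGsucc : ∀ k, G (k + 1) = F (G k) := by
    intro k
    simp only [G, Function.iterate_succ_apply']
  have hinv : ∀ k, σ (G k).2 = ρ (G k).1 := by
    intro k
    induction k with
    | zero => exact hn₀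
    | succ k _ =>
      rw [hGsucc k]
      exact hfg (G k).1 (G k).2
  refine ⟨fun k => (G k).2, fun k => (G k).1, ?_, ?_, fun k => hinv k⟩
  · apply strictMono_nat_of_lt_succ
    intro k
    rw [hGsucc k]
    exact hg (G k).1 (G k).2
  · apply strictMono_nat_of_lt_succ
    intro k
    rw [hGsucc k]
    exact hf (G k).1 (G k).2

theorem compact_extract (hL : IsLimitOp L) {D K : Set X}
    (hD : @IsOpen X (derivedTop L hL) D)
    (hT2 : @T2Space D (TopologicalSpace.induced (Subtype.val : D → X) (derivedTop L hL)))
    (hfoD : IsFirstOrderOpOn L hL D)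
    (hK : @IsCompact X (derivedTop L hL) K) (hKD : K ⊆ D)
    (σ : ℕ → X) (hσ : ∀ n, σ n ∈ K) :
    ∃ φ : ℕ → ℕ, StrictMono φ ∧ ∃ y ∈ D,
      Filter.Tendsto (σ ∘ φ) Filter.atTop (@nhds X (derivedTop L hL) y) := by
  letI t := derivedTop L hL
  have hSK : Set.range σ ⊆ K := by rintro _ ⟨n, rfl⟩; exact hσ n
  have hSD : Set.range σ ⊆ D := hSK.trans hKD
  by_contra H
  push_neg at H
  by_cases hfin : (Set.range σ).Infinite
  · -- infinite range case
    have star : ∀ T ⊆ Set.range σ, ∀ ρ : ℕ → X, (∀ n, ρ n ∈ T) → ∀ y, y ∈ L ρ → y ∈ D → y ∈ T := by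
      intro T hT ρ hρ y hyL hyD
      have hρD : ∀ n, ρ n ∈ D := fun n => hSD (hT (hρ n))
      have htend : Filter.Tendsto ρ Filter.atTop (@nhds X t y) := (hfoD ρ hρD y hyD).mp hyL
      by_cases hr : (Set.range ρ).Infinite
      · obtain ⟨φ, ψ, hφ, hψ, heq⟩ := exists_subseq_eq σ ρ (fun n => hT (hρ n)) hr
        exfalso
        apply H φ hφ y hyD
        have hco : σ ∘ φ = ρ ∘ ψ := funext heq
        rw [hco]
        exact htend.comp hψ.tendsto_atTop
      · obtain ⟨φ, x, hφ, hx⟩ := exists_const_subseq ρ hr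
        have hxT : x ∈ T := hx 0 ▸ hρ (φ 0)
        have hxD : x ∈ D := hT hxT |> hSD
        haveI := hT2
        have h1 : Filter.Tendsto (fun _ : ℕ => (⟨x, hxD⟩ : D)) Filter.atTop
            (@nhds D (TopologicalSpace.induced (Subtype.val : D → X) t) ⟨y, hyD⟩) := by
          rw [nhds_induced, Filter.tendsto_comap_iff]
          have : (Subtype.val : D → X) ∘ (fun _ : ℕ => (⟨x, hxD⟩ : D)) = ρ ∘ φ := by
            funext k
            exact (hx k).symm
          rw [this]
          exact htend.comp hφ.tendsto_atTop
        have h2 : Filter.Tendsto (fun _ : ℕ => (⟨x, hxD⟩ : D)) Filter.atTop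
            (@nhds D (TopologicalSpace.induced (Subtype.val : D → X) t) ⟨x, hxD⟩) :=
          tendsto_const_nhds
        have hyx : (⟨y, hyD⟩ : D) = ⟨x, hxD⟩ := tendsto_nhds_unique h1 h2
        have : y = x := congrArg Subtype.val hyx
        rw [this]
        exact hxT
    have clo : ∀ T ⊆ Set.range σ, (@closure X t T) ∩ D ⊆ T := by
      intro T hT
      set M := T ∪ ((@closure X t T) \ D) with hMdef
      have hM : SeqClosedFor L M := by
        intro ρ hρ y hy
        have hclT : SeqClosedFor L (@closure X t T) :=
          (derived_isClosed_iff hL).mp isClosed_closure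
        have hyc : y ∈ @closure X t T :=
          hclT ρ (fun n => (hρ n).elim (fun h => subset_closure h) (fun h => h.1)) hy
        by_cases hyD : y ∈ D
        · left
          by_cases hi : {n | ρ n ∈ T}.Infinite
          · refine star T hT (ρ ∘ Nat.nth _) (fun k => Nat.nth_mem_of_infinite hi k) y
              (hL ρ _ (Nat.nth_strictMono hi) hy) hyD
          · exfalso
            have hci : {n | ρ n ∉ T}.Infinite := by
              have := (Set.not_infinite.mp hi).infinite_compl
              convert this using 1
              ext n; simp
            have hDc : SeqClosedFor L Dᶜ :=
              (derived_isClosed_iff hL).mp hD.isClosed_compl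
            have hmem : ∀ k, (ρ ∘ Nat.nth (fun n => ρ n ∉ T)) k ∈ Dᶜ := by
              intro k
              have hk : ρ (Nat.nth (fun n => ρ n ∉ T) k) ∉ T := Nat.nth_mem_of_infinite hci k
              rcases hρ (Nat.nth (fun n => ρ n ∉ T) k) with h | h
              · exact absurd h hk
              · exact h.2
            exact hDc (ρ ∘ Nat.nth (fun n => ρ n ∉ T)) hmem
              (hL ρ _ (Nat.nth_strictMono hci) hy) hyD
        · right
          exact ⟨hyc, hyD⟩
      have hclM : @closure X t T ⊆ M := by
        have hMc : @IsClosed X t M := (derived_isClosed_iff hL).mpr hM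
        exact closure_minimal Set.subset_union_left hMc
      intro z hz
      rcases hclM hz.1 with h | h
      · exact h
      · exact absurd hz.2 h.2
    -- range σ is compact
    have hScl : Set.range σ = (@closure X t (Set.range σ)) ∩ K := by
      apply Set.Subset.antisymm
      · exact fun x hx => ⟨subset_closure hx, hSK hx⟩
      · intro x hx
        exact clo _ (subset_refl _) ⟨hx.1, hKD hx.2⟩
    have hScomp : @IsCompact X t (Set.range σ) := by
      rw [hScl]
      exact hK.inter_left isClosed_closure
    obtain ⟨Fin, hFin⟩ := hScomp.elim_finite_subcover
      (fun x : X => (@closure X t (Set.range σ \ {x}))ᶜ)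
      (fun x => isClosed_closure.isOpen_compl)
      (by
        intro x hx
        simp only [Set.mem_iUnion, Set.mem_compl_iff]
        refine ⟨x, fun hmem => ?_⟩
        have : x ∈ Set.range σ \ {x} := clo _ Set.diff_subset ⟨hmem, hSD hx⟩
        exact this.2 rfl)
    obtain ⟨x', hx'S, hx'F⟩ := hfin.exists_notMem_finset Fin
    have := hFin hx'S
    simp only [Set.mem_iUnion, Set.mem_compl_iff] at this
    obtain ⟨x, hxF, hx⟩ := this
    apply hx
    apply subset_closure
    refine ⟨hx'S, ?_⟩
    intro hxx
    rw [Set.mem_singleton_iff] at hxx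
    exact hx'F (hxx ▸ hxF)
  · -- finite range case
    obtain ⟨φ, x, hφ, hx⟩ := exists_const_subseq σ hfin
    have hxD : x ∈ D := hx 0 ▸ hSD ⟨φ 0, rfl⟩
    apply H φ hφ x hxD
    have : σ ∘ φ = fun _ => x := funext hx
    rw [this]
    exact tendsto_const_nhds

end Helpers

theorem stmt_12 {X : Type u} (L L' : (ℕ → X) → Set X)
    (hL : IsLimitOp L) (hL' : IsLimitOp L') (D : Set X)
    (hD : @IsOpen X (derivedTop L hL) D)
    (hT2 : @T2Space D (TopologicalSpace.induced (Subtype.val : D → X) (derivedTop L hL)))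
    (hLC : @LocallyCompactSpace D (TopologicalSpace.induced (Subtype.val : D → X) (derivedTop L hL)))
    (hfin : AFin (derivedTop L hL) (derivedTop L' hL'))
    (hfoD : IsFirstOrderOpOn L hL D)
    (he5 : ∀ σ : ℕ → X, (∀ n, σ n ∈ D) → L σ ∩ D = L' σ ∩ D)
    (hstar : ∀ σ : ℕ → X, (L' σ ∩ D).Nonempty → L' σ ⊆ D) :
    ASep (derivedTop L hL) (derivedTop L' hL') D := by
  letI t := derivedTop L hL
  intro p hp q hq
  haveI hT2' : @T2Space D (TopologicalSpace.induced (Subtype.val : D → X) t) := hT2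
  haveI hLC' : @LocallyCompactSpace D (TopologicalSpace.induced (Subtype.val : D → X) t) := hLC
  obtain ⟨s, hs_nhds, -, hs_comp⟩ :=
    hLC'.local_compact_nhds (⟨p, hp⟩ : D) Set.univ Filter.univ_mem
  set K : Set X := Subtype.val '' s with hKdef
  have hKD : K ⊆ D := by
    rintro _ ⟨d, -, rfl⟩
    exact d.2
  have hKcomp : @IsCompact X t K := hs_comp.image continuous_subtype_val
  have hscl : IsClosed s := hs_comp.isClosed
  -- K is sequentially closed for L'
  have hKseq : SeqClosedFor L' K := by
    intro σ hσK z hz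
    have hσD : ∀ n, σ n ∈ D := fun n => hKD (hσK n)
    obtain ⟨φ, hφ, y, hyD, hty⟩ := compact_extract hL hD hT2 hfoD hKcomp hKD σ hσK
    have hyL : y ∈ L (σ ∘ φ) := (hfoD (σ ∘ φ) (fun n => hσD (φ n)) y hyD).mpr hty
    have hyL' : y ∈ L' (σ ∘ φ) :=
      (((he5 (σ ∘ φ) (fun n => hσD (φ n))).subset) ⟨hyL, hyD⟩).1
    have hsubD : L' σ ⊆ D := fun w hw =>
      hstar (σ ∘ φ) ⟨y, hyL', hyD⟩ (hL' σ φ hφ hw)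
    have hzD : z ∈ D := hsubD hz
    have hzL : z ∈ L σ := (((he5 σ hσD).symm.subset) ⟨hz, hzD⟩).1
    have htz : Filter.Tendsto σ Filter.atTop (@nhds X t z) := (hfoD σ hσD z hzD).mp hzL
    -- lift to the subtype to conclude z ∈ K
    have hfs : ∀ n, (⟨σ n, hσD n⟩ : D) ∈ s := by
      intro n
      obtain ⟨d, hd, hval⟩ := hσK n
      have : (⟨σ n, hσD n⟩ : D) = d := Subtype.ext hval.symm
      rw [this]
      exact hd
    have hft : Filter.Tendsto (fun n => (⟨σ n, hσD n⟩ : D)) Filter.atTop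
        (@nhds D (TopologicalSpace.induced (Subtype.val : D → X) t) ⟨z, hzD⟩) := by
      rw [nhds_induced, Filter.tendsto_comap_iff]
      exact htz
    have hzs : (⟨z, hzD⟩ : D) ∈ s :=
      hscl.mem_of_tendsto hft (Filter.Eventually.of_forall hfs)
    exact ⟨⟨z, hzD⟩, hzs, rfl⟩
  -- build the separating sets
  have hUo : @IsOpen X t (Subtype.val '' (interior s)) :=
    hD.isOpenMap_subtype_val _ isOpen_interior
  refine ⟨Subtype.val '' (interior s), Kᶜ, hUo, ?_, ?_, ?_, ?_⟩
  · exact ((derived_isClosed_iff hL').mpr hKseq).isOpen_compl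
  · exact ⟨⟨p, hp⟩, mem_interior_iff_mem_nhds.mpr hs_nhds, rfl⟩
  · exact fun hqK => hq (hKD hqK)
  · apply Set.eq_empty_of_subset_empty
    intro x hx
    exact hx.2 (Set.image_mono interior_subset hx.1)
end

section
/- Let L be a limit operator on a set X, let D ⊆ X be an open subset of (X, τ_L) that is Hausdorff and locally compact in the subspace topology, and let L* be the modified limit operator with derived topology τ_{L*}. Assume τ_{L*} satisfies (A_Sep) with respect to (τ_L, D). If a sequence σ converges to a point q in the topology τ_{L*} and q ∈ L(σ), then q ∈ L*(σ). -/
open Set Filter Topology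

universe u

theorem stmt_14 {X : Type u} (L : (ℕ → X) → Set X) (hL : IsLimitOp L)
    (D : Set X) (hD : @IsOpen X (derivedTop L hL) D)
    (hT2 : @T2Space D (TopologicalSpace.induced (Subtype.val : D → X) (derivedTop L hL)))
    (hLC : @LocallyCompactSpace D (TopologicalSpace.induced (Subtype.val : D → X) (derivedTop L hL)))
    (hM : IsLimitOp (modOp L D))
    (hsep : ASep (derivedTop L hL) (derivedTop (modOp L D) hM) D) :
    ∀ (σ : ℕ → X) (q : X),
      Filter.Tendsto σ Filter.atTop (@nhds X (derivedTop (modOp L D) hM) q) →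
      q ∈ L σ → q ∈ modOp L D σ := by
  intro σ q hconv hq
  unfold modOp
  split_ifs with h
  · refine ⟨hq, ?_⟩
    by_contra hqD
    obtain ⟨φ, hφ, p, hpD, hp⟩ := h
    obtain ⟨U, V, hU, hV, hpU, hqV, hUV⟩ := hsep p hpD q hqD
    letI := derivedTop (modOp L D) hM
    have hev : ∀ᶠ n in atTop, σ n ∈ V := hconv (hV.mem_nhds hqV)
    obtain ⟨N, hN⟩ := Filter.eventually_atTop.mp hev
    have hmono : StrictMono (fun n => n + N) := fun a b hab => Nat.add_lt_add_right hab N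
    have hp2 : p ∈ L ((σ ∘ φ) ∘ fun n => n + N) := hL (σ ∘ φ) _ hmono hp
    have hclosed : SeqClosedFor L Uᶜ := hU
    have hvals : ∀ n, ((σ ∘ φ) ∘ fun n => n + N) n ∈ Uᶜ := by
      intro n
      have h1 : σ (φ (n + N)) ∈ V := hN _ (le_trans (by omega) (hφ.le_apply))
      intro hmem
      exact absurd hUV (Set.nonempty_iff_ne_empty.mp ⟨σ (φ (n + N)), hmem, h1⟩)
    exact hclosed _ hvals hp2 hpU
  · exact hq
end

section
/- Let L be a coherent limit operator on a set X with derived topology τ := τ_L, and let D ⊆ X be an open subset that is Hausdorff and locally compact in the subspace topology. Write L*_τ := (L_τ)* for the modification of the associated limit operator L_τ. If a point p ∈ X \ D satisfies p ∈ L*_τ(σ) for some sequence σ in X, then L^i(σ) = (L*)^i(σ) for every ordinal i ≥ 1, where L^i and (L*)^i denote the transfinite iterates of L and of the modified operator L* respectively. -/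
open Set Filter Topology

universe u

/-- In the derived topology, membership in `L σ` implies topological convergence. -/
theorem lim_mem_tendsto {X : Type u} (L : (ℕ → X) → Set X) (hL : IsLimitOp L)
    (σ : ℕ → X) (q : X) (hq : q ∈ L σ) :
    Filter.Tendsto σ Filter.atTop (@nhds X (derivedTop L hL) q) := by
  letI t := derivedTop L hL
  rw [tendsto_atTop_nhds]
  intro U hU hUopen
  have hclosed : SeqClosedFor L Uᶜ := hUopen
  by_contra h
  push_neg at h
  have hinf : {n | σ n ∈ Uᶜ}.Infinite := by
    rw [← Nat.frequently_atTop_iff_infinite, frequently_atTop]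
    intro N; obtain ⟨n, hn, hn'⟩ := h N; exact ⟨n, hn, hn'⟩
  exact hclosed _ (fun n => Nat.nth_mem_of_infinite hinf n)
    (hL σ _ (Nat.nth_strictMono hinf) hq) hU

theorem stmt_17 {X : Type u} (L : (ℕ → X) → Set X) (hL : IsLimitOp L)
    (hcoh : CoherentOp L) (D : Set X)
    (hD : @IsOpen X (derivedTop L hL) D)
    (hT2 : @T2Space D (TopologicalSpace.induced (Subtype.val : D → X) (derivedTop L hL)))
    (hLC : @LocallyCompactSpace D (TopologicalSpace.induced (Subtype.val : D → X) (derivedTop L hL)))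
    (p : X) (hp : p ∉ D) (σ : ℕ → X)
    (hpσ : p ∈ modOp (assocLimOp (derivedTop L hL)) D σ) :
    ∀ i : Ordinal.{0}, 1 ≤ i → iterOp L σ i = iterOp (modOp L D) σ i := by
  have hDc : SeqClosedFor L Dᶜ := by
    have : (Dᶜ)ᶜ ∈ {C | SeqClosedFor L C} → False ∨ True := fun _ => Or.inr trivial
    exact hD
  by_cases hcond : ∃ φ : ℕ → ℕ, StrictMono φ ∧ ∃ q ∈ D,
      q ∈ assocLimOp (derivedTop L hL) (σ ∘ φ)
  · rw [modOp, if_pos hcond] at hpσ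
    exact absurd hpσ.2 hp
  · have hnoL : ∀ φ : ℕ → ℕ, StrictMono φ → ∀ q ∈ D, q ∉ L (σ ∘ φ) := by
      intro φ hφ q hq hqL
      exact hcond ⟨φ, hφ, q, hq, lim_mem_tendsto L hL (σ ∘ φ) q hqL⟩
    have main : ∀ i : Ordinal.{0},
        iterOp L σ i ⊆ Dᶜ ∧ iterOp L σ i = iterOp (modOp L D) σ i := by
      intro i
      induction i using Ordinal.induction with
      | h i IH =>
        by_cases hi : i = 1
        · subst hi
          constructor
          · intro q hq hqD
            rw [iterOp, if_pos rfl] at hq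
            exact hnoL id strictMono_id q hqD (by simpa [Function.comp] using hq)
          · rw [iterOp, if_pos rfl]
            conv_rhs => rw [iterOp, if_pos rfl]
            rw [modOp, if_neg]
            rintro ⟨φ, hφ, q, hq, hqL⟩
            exact hnoL φ hφ q hq hqL
        · have hval : ∀ ρ : ℕ → X,
              (∀ n, ∃ j : Ordinal.{0}, ∃ _hj : j < i, ρ n ∈ iterOp L σ j) →
              ∀ n, ρ n ∈ Dᶜ := by
            intro ρ hρ n
            obtain ⟨j, hj, hm⟩ := hρ n
            exact (IH j hj).1 hm
          have hmodeq : ∀ ρ : ℕ → X, (∀ n, ρ n ∈ Dᶜ) → modOp L D ρ = L ρ := by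
            intro ρ hρ
            rw [modOp, if_neg]
            rintro ⟨φ, hφ, q, hq, hqL⟩
            exact hDc (ρ ∘ φ) (fun n => hρ (φ n)) hqL hq
          constructor
          · intro q hq
            rw [iterOp, if_neg hi] at hq
            obtain ⟨ρ, hρ, hqL⟩ := hq
            exact hDc ρ (hval ρ hρ) hqL
          · rw [iterOp, if_neg hi]
            conv_rhs => rw [iterOp, if_neg hi]
            ext q
            simp only [Set.mem_setOf_eq]
            constructor
            · rintro ⟨ρ, hρ, hqL⟩
              refine ⟨ρ, fun n => ?_, ?_⟩
              · obtain ⟨j, hj, hm⟩ := hρ n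
                exact ⟨j, hj, (IH j hj).2 ▸ hm⟩
              · rw [hmodeq ρ (hval ρ hρ)]; exact hqL
            · rintro ⟨ρ, hρ, hqL⟩
              have hρ' : ∀ n, ∃ j : Ordinal.{0}, ∃ _hj : j < i, ρ n ∈ iterOp L σ j := by
                intro n
                obtain ⟨j, hj, hm⟩ := hρ n
                exact ⟨j, hj, ((IH j hj).2).symm ▸ hm⟩
              refine ⟨ρ, hρ', ?_⟩
              rw [hmodeq ρ (hval ρ hρ')] at hqL
              exact hqL
    intro i _
    exact (main i).2
end

section
/- Let L be a coherent limit operator on a set X with derived topology τ := τ_L, and let D ⊆ X be an open subset that is Hausdorff and locally compact in the subspace topology. Assume L is of k-th order for some ordinal k (i.e., L_τ(σ) = L^k(σ) for every sequence σ, where L^k is the k-th transfinite iterate of L and L_τ is the associated limit operator of τ) and that L is of first order on D. If the modified operator L* is of first order, then L* = (L_τ)*, i.e., L*(σ) = (L_τ)*(σ) for every sequence σ in X. -/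
open Set Filter Topology

universe u

theorem isOpen_derivedTop_iff {X : Type u} {L : (ℕ → X) → Set X} (hL : IsLimitOp L)
    {U : Set X} : @IsOpen X (derivedTop L hL) U ↔ SeqClosedFor L Uᶜ := Iff.rfl

theorem tendsto_of_memL {X : Type u} {L : (ℕ → X) → Set X} (hL : IsLimitOp L)
    {σ : ℕ → X} {p : X} (hp : p ∈ L σ) :
    Filter.Tendsto σ Filter.atTop (@nhds X (derivedTop L hL) p) := by
  letI : TopologicalSpace X := derivedTop L hL
  rw [tendsto_nhds]
  intro U hU hpU
  by_contra h
  have h' : ∃ᶠ n in Filter.atTop, σ n ∈ Uᶜ := Filter.not_eventually.mp h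
  have hinf : {n | σ n ∈ Uᶜ}.Infinite := Nat.frequently_atTop_iff_infinite.mp h'
  exact (isOpen_derivedTop_iff hL).1 hU _ (fun n => Nat.nth_mem_of_infinite hinf n)
    (hL σ _ (Nat.nth_strictMono hinf) hp) hpU

theorem tendsto_trans_seq {X : Type u} [t : TopologicalSpace X] {σ ρ : ℕ → X} {q : X}
    (h1 : ∀ n, Filter.Tendsto σ Filter.atTop (𝓝 (ρ n)))
    (h2 : Filter.Tendsto ρ Filter.atTop (𝓝 q)) :
    Filter.Tendsto σ Filter.atTop (𝓝 q) := by
  rw [tendsto_nhds]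
  intro U hU hq
  have h2' : ∀ᶠ m in Filter.atTop, ρ m ∈ U := h2 (hU.mem_nhds hq)
  obtain ⟨n, hn⟩ := h2'.exists
  exact tendsto_nhds.1 (h1 n) U hU hn

example {X : Type u} (L : (ℕ → X) → Set X) (σ : ℕ → X) : iterOp L σ 1 = L σ := by
  rw [iterOp, if_pos rfl]
theorem stmt_18 {X : Type u} (L : (ℕ → X) → Set X) (hL : IsLimitOp L)
    (hcoh : CoherentOp L) (D : Set X)
    (hD : @IsOpen X (derivedTop L hL) D)
    (hT2 : @T2Space D (TopologicalSpace.induced (Subtype.val : D → X) (derivedTop L hL)))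
    (hLC : @LocallyCompactSpace D (TopologicalSpace.induced (Subtype.val : D → X) (derivedTop L hL)))
    (k : Ordinal.{0})
    (hk : ∀ σ : ℕ → X, assocLimOp (derivedTop L hL) σ = iterOp L σ k)
    (hfoD : IsFirstOrderOpOn L hL D)
    (hM : IsLimitOp (modOp L D))
    (hfoM : IsFirstOrderOp (modOp L D) hM) :
    ∀ σ : ℕ → X, modOp L D σ = modOp (assocLimOp (derivedTop L hL)) D σ := by
  intro σ
  have hsub : ∀ (γ : ℕ → X) (p : X), p ∈ L γ → p ∈ assocLimOp (derivedTop L hL) γ :=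
    fun γ p hp => tendsto_of_memL hL hp
  -- P' implies P
  have hP'P : ∀ γ : ℕ → X,
      (∃ φ : ℕ → ℕ, StrictMono φ ∧ ∃ p ∈ D, p ∈ assocLimOp (derivedTop L hL) (γ ∘ φ)) →
      (∃ φ : ℕ → ℕ, StrictMono φ ∧ ∃ p ∈ D, p ∈ L (γ ∘ φ)) := by
    rintro γ ⟨φ, hφ, p, hpD, hconv⟩
    have hconv' : Filter.Tendsto (γ ∘ φ) Filter.atTop (@nhds X (derivedTop L hL) p) := hconv
    have hev : ∀ᶠ n in Filter.atTop, (γ ∘ φ) n ∈ D :=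
      hconv' (@IsOpen.mem_nhds X (derivedTop L hL) _ _ hD hpD)
    obtain ⟨N, hN⟩ := Filter.eventually_atTop.mp hev
    refine ⟨fun n => φ (n + N), hφ.comp (strictMono_id.add_const N), p, hpD, ?_⟩
    exact (hfoD (fun n => γ (φ (n + N))) (fun n => hN (n + N) (Nat.le_add_left N n)) p hpD).2
      ((Filter.tendsto_add_atTop_iff_nat N).2 hconv')
  by_cases hP : ∃ φ : ℕ → ℕ, StrictMono φ ∧ ∃ p ∈ D, p ∈ L (σ ∘ φ)
  · -- Case A
    have hP' : ∃ φ : ℕ → ℕ, StrictMono φ ∧ ∃ p ∈ D,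
        p ∈ assocLimOp (derivedTop L hL) (σ ∘ φ) := by
      obtain ⟨φ, hφ, p, hpD, hp⟩ := hP
      exact ⟨φ, hφ, p, hpD, hsub _ p hp⟩
    simp only [modOp]
    rw [if_pos hP, if_pos hP']
    ext p
    constructor
    · rintro ⟨hpL, hpD⟩
      exact ⟨hsub σ p hpL, hpD⟩
    · rintro ⟨hpτ, hpD⟩
      have hpt : Filter.Tendsto σ Filter.atTop (@nhds X (derivedTop L hL) p) := hpτ
      have hev : ∀ᶠ n in Filter.atTop, σ n ∈ D :=
        hpt (@IsOpen.mem_nhds X (derivedTop L hL) _ _ hD hpD)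
      obtain ⟨N, hN⟩ := Filter.eventually_atTop.mp hev
      have hρD : ∀ n, σ (n + N) ∈ D := fun n => hN (n + N) (Nat.le_add_left N n)
      have hρconv : Filter.Tendsto (fun n => σ (n + N)) Filter.atTop
          (@nhds X (derivedTop L hL) p) := (Filter.tendsto_add_atTop_iff_nat N).2 hpt
      have hpLρ : p ∈ L (fun n => σ (n + N)) := (hfoD _ hρD p hpD).2 hρconv
      have hPρ : ∃ φ : ℕ → ℕ, StrictMono φ ∧ ∃ q ∈ D, q ∈ L ((fun n => σ (n + N)) ∘ φ) :=
        ⟨id, strictMono_id, p, hpD, hpLρ⟩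
      have hpMρ : p ∈ modOp L D (fun n => σ (n + N)) := by
        simp only [modOp]
        rw [if_pos hPρ]
        exact ⟨hpLρ, hpD⟩
      have h1 : Filter.Tendsto (fun n => σ (n + N)) Filter.atTop
          (@nhds X (derivedTop (modOp L D) hM) p) := (hfoM _ p).1 hpMρ
      have h2 : Filter.Tendsto σ Filter.atTop
          (@nhds X (derivedTop (modOp L D) hM) p) :=
        (Filter.tendsto_add_atTop_iff_nat N).1 h1
      have hpMσ : p ∈ modOp L D σ := (hfoM σ p).2 h2
      simp only [modOp] at hpMσ
      rw [if_pos hP] at hpMσ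
      exact hpMσ
  · -- Case B
    have hP' : ¬ ∃ φ : ℕ → ℕ, StrictMono φ ∧ ∃ p ∈ D,
        p ∈ assocLimOp (derivedTop L hL) (σ ∘ φ) := fun h => hP (hP'P σ h)
    simp only [modOp]
    rw [if_neg hP, if_neg hP']
    have hLσD : ∀ q ∈ L σ, q ∉ D := fun q hq hqD => hP ⟨id, strictMono_id, q, hqD, hq⟩
    refine Set.Subset.antisymm (fun p hp => hsub σ p hp) ?_
    rw [hk σ]
    have key : ∀ j : Ordinal.{0}, iterOp L σ j ⊆ L σ := by
      intro j
      induction j using Ordinal.induction with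
      | h j IH =>
        by_cases hj : j = 1
        · subst hj
          rw [iterOp, if_pos rfl]
        · intro p hp
          rw [iterOp, if_neg hj] at hp
          obtain ⟨ρ, hρ, hpLρ⟩ := hp
          have hρL : ∀ n, ρ n ∈ L σ := by
            intro n
            obtain ⟨j', hj', hm⟩ := hρ n
            exact IH j' hj' hm
          have hPρ : ¬ ∃ φ : ℕ → ℕ, StrictMono φ ∧ ∃ q ∈ D, q ∈ L (ρ ∘ φ) := by
            rintro ⟨φ, hφ, q, hqD, hq⟩
            have hconv : Filter.Tendsto (ρ ∘ φ) Filter.atTop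
                (@nhds X (derivedTop L hL) q) := tendsto_of_memL hL hq
            have hev : ∀ᶠ n in Filter.atTop, (ρ ∘ φ) n ∈ D :=
              hconv (@IsOpen.mem_nhds X (derivedTop L hL) _ _ hD hqD)
            obtain ⟨n, hn⟩ := hev.exists
            exact hLσD _ (hρL (φ n)) hn
          have hpMρ : p ∈ modOp L D ρ := by
            simp only [modOp]
            rw [if_neg hPρ]
            exact hpLρ
          have hρM : ∀ n, ρ n ∈ modOp L D σ := by
            intro n
            simp only [modOp]
            rw [if_neg hP]
            exact hρL n
          have h1 : ∀ n, Filter.Tendsto σ Filter.atTop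
              (@nhds X (derivedTop (modOp L D) hM) (ρ n)) :=
            fun n => (hfoM σ (ρ n)).1 (hρM n)
          have h2 : Filter.Tendsto ρ Filter.atTop
              (@nhds X (derivedTop (modOp L D) hM) p) := (hfoM ρ p).1 hpMρ
          have h3 := @tendsto_trans_seq X (derivedTop (modOp L D) hM) σ ρ p h1 h2
          have hpMσ : p ∈ modOp L D σ := (hfoM σ p).2 h3
          simp only [modOp] at hpMσ
          rw [if_neg hP] at hpMσ
          exact hpMσ
    exact key k
end
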